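/- arXiv:1412.8580 — 3 statements merged into one kernel-verified Lean document; each statement's English description precedes it below -/
import Mathlib

section
/- Let α < β be real numbers and let z be a real number with z > β. Then ∫_α^β (1/(π √((x−α)(β−x)))) · dx/(x−z) = −1 / √((z−α)(z−β)). -/
open Real MeasureTheory Filter Set Topology intervalIntegral

private lemma sqrt_weight_integrable (a b : ℝ) (hab : a < b) :
    IntervalIntegrable (fun x => 1 / Real.sqrt ((x - a) * (b - x))) volume a b := by
  have ham : a < (a + b) / 2 := by linarith
  have hmb : (a + b) / 2 < b := by linarith
  have hmeas : ∀ u v : ℝ, AEStronglyMeasurable (fun x => 1 / Real.sqrt ((x - a) * (b - x)))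
      (volume.restrict (Set.uIoc u v)) := by
    intro u v
    apply Measurable.aestronglyMeasurable
    fun_prop
  have hL : IntervalIntegrable (fun x => 1 / Real.sqrt ((x - a) * (b - x))) volume a ((a+b)/2) := by
    have base : IntervalIntegrable (fun x : ℝ => x ^ (-(1/2) : ℝ)) volume 0 ((a+b)/2 - a) :=
      intervalIntegrable_rpow' (by norm_num)
    have hL0 : IntervalIntegrable (fun x : ℝ => (x - a) ^ (-(1/2) : ℝ)) volume a ((a+b)/2) := by
      have := base.comp_sub_right a
      norm_num at this
      convert this using 2 <;> ring
    refine IntervalIntegrable.mono_fun'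
      (g := fun x => (Real.sqrt (b - (a+b)/2))⁻¹ * (x - a) ^ (-(1/2) : ℝ))
      (hL0.const_mul _) (hmeas _ _) ?_
    rw [Set.uIoc_of_le ham.le]
    refine (MeasureTheory.ae_restrict_iff' measurableSet_Ioc).2 (Filter.Eventually.of_forall
      fun x hx => ?_)
    obtain ⟨h1, h2⟩ := hx
    have hxa : 0 < x - a := by linarith
    have hbm : 0 < b - (a+b)/2 := by linarith
    have hbx : 0 < b - x := by linarith
    have hrpow : (x - a) ^ (-(1/2) : ℝ) = (Real.sqrt (x - a))⁻¹ := by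
      rw [Real.rpow_neg hxa.le, Real.sqrt_eq_rpow]
    dsimp only
    rw [hrpow, Real.norm_eq_abs, abs_of_nonneg (by positivity), ← mul_inv, one_div]
    have key : Real.sqrt (b - (a+b)/2) * Real.sqrt (x - a) ≤ Real.sqrt ((x - a) * (b - x)) := by
      rw [← Real.sqrt_mul hbm.le]
      apply Real.sqrt_le_sqrt
      nlinarith
    exact inv_anti₀ (by positivity) key
  have hR : IntervalIntegrable (fun x => 1 / Real.sqrt ((x - a) * (b - x))) volume ((a+b)/2) b := by
    have base : IntervalIntegrable (fun x : ℝ => x ^ (-(1/2) : ℝ)) volume 0 (b - (a+b)/2) :=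
      intervalIntegrable_rpow' (by norm_num)
    have hR0 : IntervalIntegrable (fun x : ℝ => (b - x) ^ (-(1/2) : ℝ)) volume ((a+b)/2) b := by
      have := (base.comp_sub_left b).symm
      norm_num at this
      convert this using 2 <;> ring
    refine IntervalIntegrable.mono_fun'
      (g := fun x => (Real.sqrt ((a+b)/2 - a))⁻¹ * (b - x) ^ (-(1/2) : ℝ))
      (hR0.const_mul _) (hmeas _ _) ?_
    rw [Set.uIoc_of_le hmb.le]
    refine (MeasureTheory.ae_restrict_iff' measurableSet_Ioc).2 (Filter.Eventually.of_forall
      fun x hx => ?_)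
    obtain ⟨h1, h2⟩ := hx
    have hxa : 0 < x - a := by linarith
    have hma : 0 < (a+b)/2 - a := by linarith
    have hbx : 0 ≤ b - x := by linarith
    have hrpow : (b - x) ^ (-(1/2) : ℝ) = (Real.sqrt (b - x))⁻¹ := by
      rw [Real.rpow_neg hbx, Real.sqrt_eq_rpow]
    dsimp only
    rw [hrpow, Real.norm_eq_abs, abs_of_nonneg (by positivity), ← mul_inv, one_div]
    rcases eq_or_lt_of_le hbx with hb0 | hb0
    · rw [← hb0]
      simp
    · have key : Real.sqrt ((a+b)/2 - a) * Real.sqrt (b - x) ≤ Real.sqrt ((x - a) * (b - x)) := by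
        rw [← Real.sqrt_mul hma.le]
        apply Real.sqrt_le_sqrt
        nlinarith
      exact inv_anti₀ (by positivity) key
  exact hL.trans hR

/-- `∫_α^β dx/(π √((x−α)(β−x)) (x−z)) = −1/√((z−α)(z−β))` for `z > β`. -/
theorem cauchy_integral_arcsine_weight (α β z : ℝ) (hαβ : α < β) (hz : β < z) :
    ∫ x in α..β, (1 / (π * Real.sqrt ((x - α) * (β - x)))) * (1 / (x - z))
      = -1 / Real.sqrt ((z - α) * (z - β)) := by
  have hzα : 0 < z - α := by linarith
  have hzβ : 0 < z - β := by linarith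
  have hβα : 0 < β - α := by linarith
  have hπ : (0:ℝ) < π := Real.pi_pos
  set k : ℝ := Real.sqrt ((z - β) / (z - α)) with hkdef
  have hk : 0 < k := Real.sqrt_pos.2 (by positivity)
  set D : ℝ := Real.sqrt ((z - α) * (z - β)) with hDdef
  have hD : 0 < D := Real.sqrt_pos.2 (by positivity)
  set c : ℝ := -2 / (π * D) with hcdef
  set F : ℝ → ℝ := fun x => c * Real.arctan (k * Real.sqrt ((x - α) / (β - x))) with hFdef
  have hp : 0 < Real.sqrt (z - α) := Real.sqrt_pos.2 hzα
  have hq : 0 < Real.sqrt (z - β) := Real.sqrt_pos.2 hzβ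
  have hp2 : Real.sqrt (z - α) ^ 2 = z - α := Real.sq_sqrt hzα.le
  have hck : c * k = -2 / (π * (z - α)) := by
    rw [hcdef, hkdef, hDdef, Real.sqrt_mul hzα.le, Real.sqrt_div hzβ.le]
    field_simp
    linear_combination hp2
  -- integrability
  have hint : IntervalIntegrable
      (fun x => (1 / (π * Real.sqrt ((x - α) * (β - x)))) * (1 / (x - z))) volume α β := by
    have hfun : (fun x => (1 / (π * Real.sqrt ((x - α) * (β - x)))) * (1 / (x - z)))
        = fun x => (1 / Real.sqrt ((x - α) * (β - x))) * (π * (x - z))⁻¹ := by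
      funext x
      simp only [one_div, mul_inv]
      ring
    rw [hfun]
    refine (sqrt_weight_integrable α β hαβ).mul_continuousOn ?_
    refine ContinuousOn.inv₀ (by fun_prop) ?_
    intro x hx
    rw [Set.uIcc_of_le hαβ.le] at hx
    have hlt : x - z < 0 := by have := hx.2; linarith
    exact mul_ne_zero (ne_of_gt hπ) (ne_of_lt hlt)
  -- derivative on the open interval
  have hderiv : ∀ x ∈ Set.Ioo α β,
      HasDerivAt F ((1 / (π * Real.sqrt ((x - α) * (β - x)))) * (1 / (x - z))) x := by
    intro x hx
    obtain ⟨hax, hxb⟩ := hx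
    have hbx : 0 < β - x := by linarith
    have hxa : 0 < x - α := by linarith
    have hzx : 0 < z - x := by linarith
    have hu0 : 0 < Real.sqrt (x - α) := Real.sqrt_pos.2 hxa
    have hv0 : 0 < Real.sqrt (β - x) := Real.sqrt_pos.2 hbx
    have hg : HasDerivAt (fun y => (y - α) / (β - y)) ((β - α) / (β - x)^2) x := by
      have h1 : HasDerivAt (fun y : ℝ => y - α) 1 x := (hasDerivAt_id x).sub_const α
      have h2 : HasDerivAt (fun y : ℝ => β - y) (-1) x := by
        simpa using (hasDerivAt_id x).const_sub β
      have h3 := h1.div h2 (by positivity : β - x ≠ 0)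
      refine h3.congr_deriv ?_
      ring
    have hgx : (0:ℝ) < (x - α) / (β - x) := by positivity
    have hs := hg.sqrt (ne_of_gt hgx)
    have hks := hs.const_mul k
    have harc := hks.arctan
    have hFd := harc.const_mul c
    have hsq : Real.sqrt ((x - α) / (β - x)) = Real.sqrt (x - α) / Real.sqrt (β - x) :=
      Real.sqrt_div hxa.le _
    have hA : 1 + (k * Real.sqrt ((x - α) / (β - x)))^2 = ((β - α) * (z - x)) / ((z - α) * (β - x)) := by
      rw [mul_pow, Real.sq_sqrt hgx.le, hkdef,
        Real.sq_sqrt (by positivity : (0:ℝ) ≤ (z - β) / (z - α))]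
      field_simp
      ring
    have hmain : c * (1 / (((β - α) * (z - x)) / ((z - α) * (β - x))) *
        (k * ((β - α) / (β - x)^2 / (2 * (Real.sqrt (x - α) / Real.sqrt (β - x))))))
        = (1 / (π * (Real.sqrt (x - α) * Real.sqrt (β - x)))) * (1 / (x - z)) := by
      rw [one_div_div]
      have e1 : c * (((z - α) * (β - x)) / ((β - α) * (z - x)) *
          (k * ((β - α) / (β - x)^2 / (2 * (Real.sqrt (x - α) / Real.sqrt (β - x))))))
          = (c * k) * (((z - α) * (β - x)) / ((β - α) * (z - x)) *
            ((β - α) / (β - x)^2 / (2 * (Real.sqrt (x - α) / Real.sqrt (β - x))))) := by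
        ring
      rw [e1, hck]
      set u := Real.sqrt (x - α) with hudef
      set v := Real.sqrt (β - x) with hvdef
      have hv2 : v ^ 2 = β - x := Real.sq_sqrt hbx.le
      have h1 : π ≠ 0 := ne_of_gt hπ
      have h2 : z - α ≠ 0 := ne_of_gt hzα
      have h3 : β - α ≠ 0 := ne_of_gt hβα
      have h4 : z - x ≠ 0 := ne_of_gt hzx
      have h5 : u ≠ 0 := ne_of_gt hu0
      have h6 : v ≠ 0 := ne_of_gt hv0
      have h7 : x - z ≠ 0 := by intro h; apply h4; linarith [sub_eq_zero.1 h]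
      rw [← hv2]
      field_simp
      ring
    refine hFd.congr_deriv ?_
    rw [Real.sqrt_mul hxa.le, hA, hsq]
    exact hmain
  -- limit at α
  have ha : Tendsto F (𝓝[>] α) (𝓝 0) := by
    have hcont : ContinuousAt F α := by
      refine continuousAt_const.mul (Real.continuous_arctan.continuousAt.comp ?_)
      refine continuousAt_const.mul (Real.continuous_sqrt.continuousAt.comp ?_)
      exact ContinuousAt.div (by fun_prop) (by fun_prop) (by positivity)
    have h0 : F α = 0 := by
      rw [hFdef]
      simp
    have ht : Tendsto F (𝓝[>] α) (𝓝 (F α)) :=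
      hcont.tendsto.mono_left nhdsWithin_le_nhds
    rwa [h0] at ht
  -- limit at β
  have hb : Tendsto F (𝓝[<] β) (𝓝 (-1 / D)) := by
    have t1 : Tendsto (fun x => β - x) (𝓝[<] β) (𝓝[>] 0) := by
      apply tendsto_nhdsWithin_of_tendsto_nhds_of_eventually_within
      · have : Tendsto (fun x => β - x) (𝓝 β) (𝓝 (β - β)) :=
          (continuous_const.sub continuous_id).tendsto β
        simpa using this.mono_left nhdsWithin_le_nhds
      · filter_upwards [self_mem_nhdsWithin] with x hx
        simp only [Set.mem_Ioi]
        exact sub_pos.2 (Set.mem_Iio.1 hx)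
    have t2 : Tendsto (fun x => (β - x)⁻¹) (𝓝[<] β) atTop :=
      tendsto_inv_nhdsGT_zero.comp t1
    have t3 : Tendsto (fun x => (x - α) * (β - x)⁻¹) (𝓝[<] β) atTop := by
      refine Filter.Tendsto.pos_mul_atTop hβα ?_ t2
      have : Tendsto (fun x : ℝ => x - α) (𝓝 β) (𝓝 (β - α)) :=
        (continuous_id.sub continuous_const).tendsto β
      exact this.mono_left nhdsWithin_le_nhds
    have t3' : Tendsto (fun x => (x - α) / (β - x)) (𝓝[<] β) atTop := by
      simpa [div_eq_mul_inv] using t3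
    have sqrtTop : Tendsto Real.sqrt atTop atTop := by
      refine (tendsto_rpow_atTop (by norm_num : (0:ℝ) < 1/2)).congr' ?_
      filter_upwards [eventually_ge_atTop 0] with x hx
      exact (Real.sqrt_eq_rpow x).symm
    have t4 : Tendsto (fun x => Real.sqrt ((x - α) / (β - x))) (𝓝[<] β) atTop :=
      sqrtTop.comp t3'
    have t5 : Tendsto (fun x => k * Real.sqrt ((x - α) / (β - x))) (𝓝[<] β) atTop :=
      t4.const_mul_atTop hk
    have t6 : Tendsto (fun x => Real.arctan (k * Real.sqrt ((x - α) / (β - x)))) (𝓝[<] β)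
        (𝓝 (π / 2)) :=
      (Real.tendsto_arctan_atTop.mono_right nhdsWithin_le_nhds).comp t5
    have t7 : Tendsto F (𝓝[<] β) (𝓝 (c * (π / 2))) := t6.const_mul c
    have hval : c * (π / 2) = -1 / D := by
      rw [hcdef]
      field_simp
    rwa [hval] at t7
  have key := intervalIntegral.integral_eq_sub_of_hasDerivAt_of_tendsto hαβ hderiv hint ha hb
  rw [key]
  rw [hDdef]
  ring
end

section
/- Let α ∈ (−1, ∞) and let z be a real number with z > α. Then −(1/π) ∫_{−1}^{α} (√(x+1)/√(α−x)) · dx/(x−z) = √((z+1)/(z−α)) − 1. -/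
open Real MeasureTheory Set Filter Topology intervalIntegral

private lemma cisw_deriv (α z : ℝ) (hα : -1 < α) (hz : α < z) (k : ℝ) (hk0 : 0 < k)
    (hk2 : k ^ 2 = (z + 1) / (z - α)) (x : ℝ) (hx : x ∈ Set.Ioo (-1 : ℝ) α) :
    HasDerivAt (fun y => 2 * Real.arctan (Real.sqrt (y+1) / Real.sqrt (α - y)) -
      2 * k * Real.arctan (Real.sqrt (y+1) / Real.sqrt (α - y) / k))
      (Real.sqrt (x + 1) / Real.sqrt (α - x) * (1 / (x - z))) x := by
  have hx1 : 0 < x + 1 := by linarith [hx.1]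
  have hx2 : 0 < α - x := by linarith [hx.2]
  have hzα : 0 < z - α := by linarith
  have hz1 : 0 < z + 1 := by linarith
  have hzx : 0 < z - x := by linarith
  have ha : 0 < Real.sqrt (x+1) := Real.sqrt_pos.2 hx1
  have hb : 0 < Real.sqrt (α - x) := Real.sqrt_pos.2 hx2
  have ha2 : Real.sqrt (x+1) ^ 2 = x + 1 := Real.sq_sqrt hx1.le
  have hb2 : Real.sqrt (α-x) ^ 2 = α - x := Real.sq_sqrt hx2.le
  have hda : HasDerivAt (fun y : ℝ => Real.sqrt (y+1)) (1 / (2 * Real.sqrt (x+1))) x := by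
    simpa using ((hasDerivAt_id x).add_const 1).sqrt hx1.ne'
  have hdb : HasDerivAt (fun y : ℝ => Real.sqrt (α - y)) ((-1) / (2 * Real.sqrt (α-x))) x := by
    simpa using ((hasDerivAt_id x).const_sub α).sqrt hx2.ne'
  have hdu := hda.div hdb hb.ne'
  have H := ((hdu.arctan).const_mul 2).sub (((hdu.div_const k).arctan).const_mul (2*k))
  convert H using 1
  case e'_4 => rfl
  case e'_5 => rfl
  case e'_8 => rfl
  rw [show (1 / (2 * Real.sqrt (x + 1)) * Real.sqrt (α - x) -
        Real.sqrt (x + 1) * (-1 / (2 * Real.sqrt (α - x)))) / Real.sqrt (α - x) ^ 2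
      = (α + 1) / (2 * Real.sqrt (x+1) * Real.sqrt (α-x) * (α - x)) by
        rw [div_eq_div_iff (by positivity) (by positivity)]
        field_simp
        linear_combination (α-x)*ha2 - (x+1)*hb2]
  simp only [Pi.div_apply]
  rw [show (1:ℝ) + (Real.sqrt (x + 1) / Real.sqrt (α - x)) ^ 2 = (α + 1) / (α - x) by
        rw [div_pow, ha2, hb2]; field_simp; ring]
  rw [show (1:ℝ) + (Real.sqrt (x + 1) / Real.sqrt (α - x) / k) ^ 2
      = (z - x) * (α + 1) / ((α - x) * (z + 1)) by
        rw [div_pow, div_pow, ha2, hb2, hk2]; field_simp; ring]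
  have hxz : x - z ≠ 0 := by intro h; rw [sub_eq_zero] at h; linarith
  have hα1 : (α : ℝ) + 1 ≠ 0 := by linarith
  have key : Real.sqrt (x + 1) / Real.sqrt (α - x) * (1 / (x - z))
      = -(x+1) / ((z - x) * (Real.sqrt (x+1) * Real.sqrt (α-x))) := by
    rw [div_mul_div_comm, div_eq_div_iff (mul_ne_zero hb.ne' hxz) (by positivity)]
    linear_combination (Real.sqrt (α-x) * (z-x)) * ha2
  rw [key, one_div_div, one_div_div]
  field_simp
  ring

/-- `−(1/π)∫_{−1}^α (√(x+1)/√(α−x)) dx/(x−z) = √((z+1)/(z−α)) − 1` for `z > α > −1`. -/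
theorem cauchy_integral_sqrt_weight (α z : ℝ) (hα : -1 < α) (hz : α < z) :
    -(1 / π) * ∫ x in (-1 : ℝ)..α, (Real.sqrt (x + 1) / Real.sqrt (α - x)) * (1 / (x - z))
      = Real.sqrt ((z + 1) / (z - α)) - 1 := by
  have hzα : 0 < z - α := by linarith
  have hz1 : 0 < z + 1 := by linarith
  set k := Real.sqrt ((z + 1) / (z - α)) with hkdef
  have hk0 : 0 < k := Real.sqrt_pos.2 (div_pos hz1 hzα)
  have hk2 : k ^ 2 = (z + 1) / (z - α) := Real.sq_sqrt (div_pos hz1 hzα).le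
  set f : ℝ → ℝ := fun x => Real.sqrt (x + 1) / Real.sqrt (α - x) * (1 / (x - z)) with hfdef
  set F : ℝ → ℝ := fun y => 2 * Real.arctan (Real.sqrt (y+1) / Real.sqrt (α - y)) -
      2 * k * Real.arctan (Real.sqrt (y+1) / Real.sqrt (α - y) / k) with hFdef
  -- integrability
  have hint : IntervalIntegrable f volume (-1) α := by
    have hb : IntervalIntegrable (fun x : ℝ => (α - x) ^ (-(1/2) : ℝ)) volume (-1) α := by
      have := (intervalIntegrable_rpow' (a := 0) (b := α + 1) (r := (-(1/2) : ℝ))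
        (by norm_num)).comp_sub_left α
      simpa using this.symm
    have hbc : IntervalIntegrable
        (fun x : ℝ => Real.sqrt (α + 1) / (z - α) * (α - x) ^ (-(1/2) : ℝ)) volume (-1) α :=
      hb.const_mul _
    rw [intervalIntegrable_iff_integrableOn_Ioc_of_le (by linarith)] at hbc ⊢
    refine hbc.mono' ?_ ?_
    · apply Measurable.aestronglyMeasurable
      exact ((Real.continuous_sqrt.comp (by continuity)).measurable.div
        (Real.continuous_sqrt.comp (by continuity)).measurable).mul
        (measurable_const.div (by measurability))
    · rw [ae_restrict_iff' measurableSet_Ioc]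
      refine Eventually.of_forall fun x hx => ?_
      have hrp : (α - x) ^ (-(1/2) : ℝ) = (Real.sqrt (α - x))⁻¹ := by
        rw [Real.rpow_neg (by linarith [hx.2]), Real.sqrt_eq_rpow]
      rcases eq_or_lt_of_le hx.2 with h | h
      · have h0 : Real.sqrt (α - x) = 0 := by rw [h]; simp
        simp only [hfdef, h0, div_zero, zero_mul, norm_zero]
        exact mul_nonneg (by positivity) (Real.rpow_nonneg (by linarith [hx.2]) _)
      · have hx1 : 0 < x + 1 := by linarith [hx.1]
        have hx2 : 0 < α - x := by linarith
        have hzx : 0 < z - x := by linarith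
        have habs : |1/(x - z)| = 1/(z - x) := by
          rw [abs_div, abs_one, abs_of_neg (show x - z < 0 by linarith)]; ring_nf
        have h1 : ‖f x‖ = Real.sqrt (x + 1) / Real.sqrt (α - x) * (1 / (z - x)) := by
          rw [hfdef, Real.norm_eq_abs, abs_mul, abs_div,
            abs_of_nonneg (Real.sqrt_nonneg _), abs_of_nonneg (Real.sqrt_nonneg _), habs]
        rw [h1, hrp]
        calc Real.sqrt (x + 1) / Real.sqrt (α - x) * (1 / (z - x))
            ≤ Real.sqrt (α + 1) / Real.sqrt (α - x) * (1 / (z - α)) := by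
              gcongr
              all_goals first
                | exact Real.sqrt_le_sqrt (by linarith)
                | linarith
                | positivity
          _ = Real.sqrt (α + 1) / (z - α) * (Real.sqrt (α - x))⁻¹ := by
              ring
  -- FTC on [-1, b] for b < α
  have hF0 : F (-1) = 0 := by
    simp [hFdef, show (-1:ℝ) + 1 = 0 by norm_num]
  have key : ∀ b ∈ Ioo (-1:ℝ) α, (∫ x in (-1:ℝ)..b, f x) = F b := by
    intro b hb
    have hcont : ContinuousOn F (Icc (-1) b) := by
      intro y hy
      have hy2 : 0 < α - y := by linarith [hy.2, hb.2]
      apply ContinuousAt.continuousWithinAt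
      have hc : ContinuousAt (fun y => Real.sqrt (y+1) / Real.sqrt (α - y)) y := by
        apply ContinuousAt.div
        · exact (Real.continuous_sqrt.comp (by continuity)).continuousAt
        · exact (Real.continuous_sqrt.comp (by continuity)).continuousAt
        · exact (Real.sqrt_pos.2 hy2).ne'
      exact ((Real.continuous_arctan.continuousAt.comp hc).const_mul 2).sub
        ((Real.continuous_arctan.continuousAt.comp (hc.div_const k)).const_mul (2*k))
    have h := intervalIntegral.integral_eq_sub_of_hasDeriv_right_of_le hb.1.le hcont
      (fun x hx => (cisw_deriv α z hα hz k hk0 hk2 x ⟨hx.1, lt_trans hx.2 hb.2⟩).hasDerivWithinAt)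
      (hint.mono_set (by
        rw [uIcc_of_le hb.1.le, uIcc_of_le (show (-1:ℝ) ≤ α by linarith)]
        exact Icc_subset_Icc le_rfl hb.2.le))
    rw [h, hF0, sub_zero]
  -- primitive is continuous up to α
  have hIcc : IntegrableOn f (uIcc (-1:ℝ) α) volume := by
    rw [uIcc_of_le (show (-1:ℝ) ≤ α by linarith)]
    exact (intervalIntegrable_iff_integrableOn_Icc_of_le (by linarith)).1 hint
  have hP : ContinuousOn (fun b => ∫ x in (-1:ℝ)..b, f x) (uIcc (-1:ℝ) α) :=
    intervalIntegral.continuousOn_primitive_interval hIcc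
  have hne : (𝓝[Ioo (-1:ℝ) α] α).NeBot :=
    mem_closure_iff_nhdsWithin_neBot.1 (by
      rw [closure_Ioo (show (-1:ℝ) ≠ α by linarith)]
      exact ⟨by linarith, le_rfl⟩)
  have hPt : Tendsto (fun b => ∫ x in (-1:ℝ)..b, f x) (𝓝[Ioo (-1:ℝ) α] α)
      (𝓝 (∫ x in (-1:ℝ)..α, f x)) := by
    have h := (hP α right_mem_uIcc).tendsto
    exact h.mono_left (nhdsWithin_mono α (by
      rw [uIcc_of_le (show (-1:ℝ) ≤ α by linarith)]
      exact Ioo_subset_Icc_self))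
  -- limit of F at α from the left
  have hFt : Tendsto F (𝓝[Ioo (-1:ℝ) α] α) (𝓝 (π - k * π)) := by
    have h1 : Tendsto (fun x : ℝ => Real.sqrt (α - x)) (𝓝[Ioo (-1:ℝ) α] α) (𝓝[>] 0) := by
      rw [tendsto_nhdsWithin_iff]
      constructor
      · have hc : Continuous fun x : ℝ => Real.sqrt (α - x) :=
          Real.continuous_sqrt.comp (continuous_const.sub continuous_id)
        have h := hc.tendsto α
        simpa using h.mono_left nhdsWithin_le_nhds
      · exact eventually_mem_nhdsWithin.mono fun x hx =>
          Real.sqrt_pos.2 (by linarith [hx.2] : (0:ℝ) < α - x)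
    have h2 : Tendsto (fun x : ℝ => (Real.sqrt (α - x))⁻¹) (𝓝[Ioo (-1:ℝ) α] α) atTop :=
      h1.inv_tendsto_nhdsGT_zero
    have hc3 : Continuous fun x : ℝ => Real.sqrt (x+1) :=
      Real.continuous_sqrt.comp (continuous_id.add continuous_const)
    have h3 : Tendsto (fun x : ℝ => Real.sqrt (x+1)) (𝓝[Ioo (-1:ℝ) α] α)
        (𝓝 (Real.sqrt (α+1))) := (hc3.tendsto α).mono_left nhdsWithin_le_nhds
    have h4 : Tendsto (fun x : ℝ => Real.sqrt (x+1) / Real.sqrt (α - x))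
        (𝓝[Ioo (-1:ℝ) α] α) atTop := by
      simp only [div_eq_mul_inv]
      exact h3.pos_mul_atTop (Real.sqrt_pos.2 (by linarith : (0:ℝ) < α + 1)) h2
    have h5 : Tendsto (fun x : ℝ => Real.sqrt (x+1) / Real.sqrt (α - x) / k)
        (𝓝[Ioo (-1:ℝ) α] α) atTop := Tendsto.atTop_div_const hk0 h4
    have h6 := (tendsto_nhds_of_tendsto_nhdsWithin Real.tendsto_arctan_atTop).comp h4
    have h7 := (tendsto_nhds_of_tendsto_nhdsWithin Real.tendsto_arctan_atTop).comp h5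
    have h8 : Tendsto F (𝓝[Ioo (-1:ℝ) α] α) (𝓝 (2*(π/2) - 2*k*(π/2))) :=
      (h6.const_mul 2).sub (h7.const_mul (2*k))
    have : 2*(π/2) - 2*k*(π/2) = π - k * π := by ring
    rwa [this] at h8
  have hEq : Tendsto F (𝓝[Ioo (-1:ℝ) α] α) (𝓝 (∫ x in (-1:ℝ)..α, f x)) :=
    hPt.congr' (eventuallyEq_of_mem self_mem_nhdsWithin fun b hb => key b hb)
  have hval : (∫ x in (-1:ℝ)..α, f x) = π - k * π := tendsto_nhds_unique hEq hFt
  rw [hval]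
  have hπ : (π : ℝ) ≠ 0 := Real.pi_ne_zero
  field_simp
  ring
end

section
/- Let b > 0 and define h(x) = 2b (√(1−x²) − x·arccos(x)) / (1−x²)^{3/2} for x ∈ (−1, 1). Then there exist constants C > 0 and δ > 0 such that for all x ∈ (−1, −1+δ), |h(x) − bπ/(√2 (1+x)^{3/2})| ≤ C / √(1+x). -/
set_option maxHeartbeats 2000000


open Real

/-- Near `x = −1`, `h(x) = bπ/(√2 (1+x)^{3/2}) + O((1+x)^{−1/2})`. -/
theorem log_deriv_r_behavior_at_minus_one (b : ℝ) (hb : 0 < b) :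
    ∃ C > (0 : ℝ), ∃ δ > (0 : ℝ), ∀ x ∈ Set.Ioo (-1 : ℝ) (-1 + δ),
      |2 * b * (Real.sqrt (1 - x ^ 2) - x * Real.arccos x) / (1 - x ^ 2) ^ ((3 : ℝ) / 2)
          - b * π / (Real.sqrt 2 * (1 + x) ^ ((3 : ℝ) / 2))|
        ≤ C / Real.sqrt (1 + x) := by
  refine ⟨100 * b, by positivity, 1/10, by norm_num, ?_⟩
  rintro x ⟨hx1, hx2⟩
  have ht0 : (0:ℝ) < 1 + x := by linarith
  have ht1 : 1 + x < 1/10 := by linarith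
  set u := Real.sqrt (1 + x) with hu_def
  set v := Real.sqrt (1 - x) with hv_def
  have hu0 : 0 < u := Real.sqrt_pos.2 ht0
  have hu2 : u ^ 2 = 1 + x := Real.sq_sqrt ht0.le
  have hv2 : v ^ 2 = 1 - x := Real.sq_sqrt (by linarith)
  have hv1 : 1 ≤ v := by
    have h := Real.sqrt_le_sqrt (show (1:ℝ) ≤ 1 - x by linarith)
    rwa [Real.sqrt_one] at h
  have hvle : v ≤ Real.sqrt 2 := by
    rw [hv_def]; exact Real.sqrt_le_sqrt (by linarith)
  have hv0 : (0:ℝ) < v := by linarith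
  have hs2 : Real.sqrt 2 ^ 2 = 2 := Real.sq_sqrt (by norm_num)
  have hs2a : 1 ≤ Real.sqrt 2 := by
    have h := Real.sqrt_le_sqrt (show (1:ℝ) ≤ 2 by norm_num)
    rwa [Real.sqrt_one] at h
  have hs2b : Real.sqrt 2 ≤ 3/2 := by
    nlinarith [hs2, Real.sqrt_nonneg 2, sq_nonneg (Real.sqrt 2 - 3/2)]
  have hs20 : (0:ℝ) < Real.sqrt 2 := by linarith
  have hu32 : u ≤ 0.32 := by nlinarith [Real.sqrt_nonneg (1 + x)]
  -- √2 ≤ v + (1+x)/2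
  have hvlow : Real.sqrt 2 ≤ v + (1 + x) / 2 := by
    have h2 : (2:ℝ) ≤ (v + (1 + x)/2) ^ 2 := by
      nlinarith [mul_le_mul_of_nonneg_right hv1 ht0.le, sq_nonneg (1 + x)]
    calc Real.sqrt 2 ≤ Real.sqrt ((v + (1 + x)/2) ^ 2) := Real.sqrt_le_sqrt h2
      _ = v + (1 + x)/2 := Real.sqrt_sq (by positivity)
  -- rpow to pow of sqrt
  have cube : ∀ y : ℝ, 0 ≤ y → y ^ ((3:ℝ)/2) = Real.sqrt y ^ 3 := by
    intro y hy
    rw [Real.sqrt_eq_rpow, ← Real.rpow_natCast (y ^ ((1:ℝ)/2)) 3, ← Real.rpow_mul hy]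
    norm_num
  have hsplit : Real.sqrt (1 - x ^ 2) = u * v := by
    rw [show (1:ℝ) - x^2 = (1+x)*(1-x) by ring, hu_def, hv_def, ← Real.sqrt_mul ht0.le]
  have hden1 : (1 - x ^ 2) ^ ((3:ℝ)/2) = u ^ 3 * v ^ 3 := by
    rw [cube _ (by nlinarith), hsplit]; ring
  have hden2 : (1 + x) ^ ((3:ℝ)/2) = u ^ 3 := cube _ ht0.le
  -- arccos facts
  set a := Real.arccos (-x) with ha_def
  have hax : Real.arccos x = π - a := by
    rw [ha_def, Real.arccos_neg]; ring
  have hsina : Real.sin a = u * v := by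
    rw [ha_def, Real.sin_arccos, show (1:ℝ) - (-x)^2 = 1 - x^2 by ring]
    exact hsplit
  have ha0 : 0 ≤ a := Real.arccos_nonneg _
  have hapos : 0 < a := Real.arccos_pos.2 (by linarith)
  have hapi2 : a ≤ π / 2 := Real.arccos_le_pi_div_two.2 (by linarith)
  have hpil : 3 < π := Real.pi_gt_three
  have hpiu : π < 3.15 := Real.pi_lt_d2
  clear_value u v a
  -- Jordan: 2a ≤ π sin a, hence a ≤ 2.4 u
  have hjordan : 2 / π * a ≤ Real.sin a := Real.mul_le_sin ha0 hapi2
  have h2a : 2 * a ≤ π * Real.sin a := by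
    have h := mul_le_mul_of_nonneg_left hjordan Real.pi_pos.le
    have heq : π * (2 / π * a) = 2 * a := by
      field_simp
    rw [heq] at h
    linarith
  have hsin_ub : Real.sin a ≤ (3/2) * u := by
    rw [hsina]; nlinarith
  have hsin_nn : 0 ≤ Real.sin a := by rw [hsina]; positivity
  have hau : a ≤ 2.4 * u := by
    have hp : 0 ≤ (3.15 - π) * Real.sin a := mul_nonneg (by linarith) hsin_nn
    nlinarith [hp]
  have ha1 : a ≤ 0.768 := by linarith
  -- |sin a - a| ≤ 1.2 (1+x)
  have ha2 : a ^ 2 ≤ 5.76 * (1 + x) := by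
    nlinarith [mul_le_mul hau hau ha0 (by positivity : (0:ℝ) ≤ 2.4 * u)]
  have hcube_bd : a ^ 3 / 4 ≤ 1.2 * (1 + x) := by
    nlinarith [mul_le_mul ha2 ha1 ha0 (by positivity : (0:ℝ) ≤ 5.76 * (1 + x))]
  have hsin_close : |Real.sin a - a| ≤ 1.2 * (1 + x) := by
    have h1 : a - a ^ 3 / 4 < Real.sin a := by have := Real.sin_gt_sub_cube hapos; linarith [pow_pos hapos 3]
    have h2 : Real.sin a ≤ a := Real.sin_le ha0
    rw [abs_le]; constructor <;> nlinarith
  -- |N - π| ≤ 5(1+x)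
  have hN : |u * v - x * Real.arccos x - π| ≤ 5 * (1 + x) := by
    have hid : u * v - x * Real.arccos x - π
        = (Real.sin a - a) - (1 + x) * (π - a) := by
      rw [hax, hsina]; ring
    have hπa1 : (1 + x) * (π - a) ≤ 3.15 * (1 + x) := by nlinarith
    have hπa0 : 0 ≤ (1 + x) * (π - a) := mul_nonneg ht0.le (by linarith)
    rw [hid, abs_le]
    rw [abs_le] at hsin_close
    constructor <;> linarith [hsin_close.1, hsin_close.2]
  -- |2√2 - v³| ≤ 3(1+x)
  have hv3 : |2 * Real.sqrt 2 - v ^ 3| ≤ 3 * (1 + x) := by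
    have hfac : 2 * Real.sqrt 2 - v ^ 3
        = (Real.sqrt 2 - v) * (2 + Real.sqrt 2 * v + v ^ 2) := by
      linear_combination (-v) * hs2
    have h1 : Real.sqrt 2 - v ≤ (1 + x) / 2 := by linarith
    have h1' : 0 ≤ Real.sqrt 2 - v := by linarith
    have h2' : Real.sqrt 2 * v ≤ 2 := by nlinarith
    have h3 : 2 + Real.sqrt 2 * v + v ^ 2 ≤ 6 := by nlinarith
    have h3' : 0 ≤ 2 + Real.sqrt 2 * v + v ^ 2 := by positivity
    rw [hfac, abs_le]
    constructor
    · linarith [mul_nonneg h1' h3']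
    · linarith [mul_le_mul h1 h3 h3' (by linarith : (0:ℝ) ≤ (1 + x)/2)]
  -- main identity
  have hkey : 2 * b * (Real.sqrt (1 - x ^ 2) - x * Real.arccos x) / (1 - x ^ 2) ^ ((3:ℝ)/2)
      - b * π / (Real.sqrt 2 * (1 + x) ^ ((3:ℝ)/2))
      = b * (2 * Real.sqrt 2 * (u * v - x * Real.arccos x) - π * v ^ 3)
        / (Real.sqrt 2 * v ^ 3 * u ^ 3) := by
    rw [hden1, hden2, hsplit]
    field_simp
  rw [hkey]
  -- numerator bound
  have hnum : |2 * Real.sqrt 2 * (u * v - x * Real.arccos x) - π * v ^ 3|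
      ≤ 25 * (1 + x) := by
    have hid : 2 * Real.sqrt 2 * (u * v - x * Real.arccos x) - π * v ^ 3
        = 2 * Real.sqrt 2 * (u * v - x * Real.arccos x - π)
          + π * (2 * Real.sqrt 2 - v ^ 3) := by ring
    have e1 : Real.sqrt 2 * |u * v - x * Real.arccos x - π| ≤ (3/2) * (5 * (1 + x)) :=
      mul_le_mul hs2b hN (abs_nonneg _) (by norm_num)
    have e2 : π * |2 * Real.sqrt 2 - v ^ 3| ≤ 3.15 * (3 * (1 + x)) :=
      mul_le_mul hpiu.le hv3 (abs_nonneg _) (by norm_num)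
    calc |2 * Real.sqrt 2 * (u * v - x * Real.arccos x) - π * v ^ 3|
        = |2 * Real.sqrt 2 * (u * v - x * Real.arccos x - π)
            + π * (2 * Real.sqrt 2 - v ^ 3)| := by rw [hid]
      _ ≤ |2 * Real.sqrt 2 * (u * v - x * Real.arccos x - π)|
            + |π * (2 * Real.sqrt 2 - v ^ 3)| := abs_add_le _ _
      _ = 2 * (Real.sqrt 2 * |u * v - x * Real.arccos x - π|)
            + π * |2 * Real.sqrt 2 - v ^ 3| := by
          rw [abs_mul, abs_mul, abs_mul, abs_of_nonneg (by norm_num : (0:ℝ) ≤ 2),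
            abs_of_pos hs20, abs_of_pos Real.pi_pos]
          ring
      _ ≤ 2 * ((3/2) * (5 * (1 + x))) + 3.15 * (3 * (1 + x)) := by linarith
      _ ≤ 25 * (1 + x) := by linarith
  -- finish
  have hD : (0:ℝ) < Real.sqrt 2 * v ^ 3 * u ^ 3 := by positivity
  rw [abs_div, abs_mul, abs_of_pos hb, abs_of_pos hD]
  rw [div_le_div_iff₀ hD hu0]
  have hD1 : 1 ≤ Real.sqrt 2 * v ^ 3 := by
    have hv3' : (1:ℝ) ≤ v ^ 3 := one_le_pow₀ hv1
    calc (1:ℝ) = 1 * 1 := by ring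
      _ ≤ Real.sqrt 2 * v ^ 3 := mul_le_mul hs2a hv3' (by norm_num) (by linarith)
  have hgoal : b * |2 * Real.sqrt 2 * (u * v - x * Real.arccos x) - π * v ^ 3| * u
      ≤ b * (25 * (1 + x)) * u :=
    mul_le_mul_of_nonneg_right (mul_le_mul_of_nonneg_left hnum hb.le) hu0.le
  have h2 : b * (25 * (1 + x)) * u ≤ 100 * b * (Real.sqrt 2 * v ^ 3 * u ^ 3) := by
    have hux : b * (25 * (1 + x)) * u = 25 * b * u ^ 3 := by
      rw [← hu2]; ring
    rw [hux]
    have h3 : u ^ 3 ≤ Real.sqrt 2 * v ^ 3 * u ^ 3 := by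
      have h := mul_le_mul_of_nonneg_right hD1 (pow_pos hu0 3).le
      linarith
    have h4 := mul_le_mul_of_nonneg_left h3 (by positivity : (0:ℝ) ≤ 100 * b)
    have h5 : (0:ℝ) ≤ b * u ^ 3 := by positivity
    linarith
  linarith
end
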